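/- The GOU transition kernels satisfy the Chapman–Kolmogorov property: for all σ > 0, a > 0, b > 0 and μ, x₀ ∈ ℝ, the measure obtained by first sampling y from the Gaussian measure on ℝ with mean μ + (x₀ − μ)·exp(−a) and variance σ²(1 − exp(−2a)), and then sampling from the Gaussian measure with mean μ + (y − μ)·exp(−b) and variance σ²(1 − exp(−2b)) (i.e., the monadic bind of the first measure with the second kernel), equals the Gaussian measure with mean μ + (x₀ − μ)·exp(−(a+b)) and variance σ²(1 − exp(−2(a+b))). -/

import Mathlib

open MeasureTheory ProbabilityTheory Real
open scoped NNReal ENNReal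

namespace GouCK

/-- Continuity of the gaussian pdf in the mean parameter (affine in `t`). -/
lemma continuous_pdf_mean (c d x : ℝ) (v : ℝ≥0) :
    Continuous fun t : ℝ => gaussianPDFReal (c * t + d) v x := by
  simp only [gaussianPDFReal]
  fun_prop

lemma measurable_pdf_joint (c d : ℝ) (v : ℝ≥0) :
    Measurable fun p : ℝ × ℝ => gaussianPDF (c * p.1 + d) v p.2 := by
  apply Measurable.ennreal_ofReal
  have : Continuous fun p : ℝ × ℝ => gaussianPDFReal (c * p.1 + d) v p.2 := by
    simp only [gaussianPDFReal]
    fun_prop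
  exact this.measurable

lemma measurable_ker (c d : ℝ) (v : ℝ≥0) :
    Measurable fun y : ℝ => gaussianReal (c * y + d) v := by
  by_cases hv : v = 0
  · subst hv
    simp only [gaussianReal_zero_var]
    exact Measure.measurable_dirac.comp (by fun_prop)
  · apply Measure.measurable_of_measurable_coe
    intro s hs
    simp_rw [gaussianReal_apply _ hv s]
    exact (measurable_pdf_joint c d v).lintegral_prod_right'

/-- Pointwise bound for the gaussian pdf. -/
lemma pdf_le (m x : ℝ) (v : ℝ≥0) : gaussianPDFReal m v x ≤ (Real.sqrt (2 * π * v))⁻¹ := by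
  rw [gaussianPDFReal]
  have h1 : Real.exp (-(x - m) ^ 2 / (2 * v)) ≤ 1 := by
    rw [Real.exp_le_one_iff]
    apply div_nonpos_of_nonpos_of_nonneg
    · simp [sq_nonneg]
    · positivity
  calc (Real.sqrt (2 * π * v))⁻¹ * Real.exp (-(x - m) ^ 2 / (2 * v))
      ≤ (Real.sqrt (2 * π * v))⁻¹ * 1 := by
        apply mul_le_mul_of_nonneg_left h1 (by positivity)
    _ = _ := mul_one _

/-- The analytic heart: convolution of gaussian pdfs. -/
lemma real_conv (m c d : ℝ) {p q : ℝ} (hp : 0 < p) (hq : 0 < q) (x : ℝ) :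
    ∫ t : ℝ, (Real.sqrt (2 * π * p))⁻¹ * Real.exp (-(t - m) ^ 2 / (2 * p)) *
        ((Real.sqrt (2 * π * q))⁻¹ * Real.exp (-(x - (c * t + d)) ^ 2 / (2 * q)))
      = (Real.sqrt (2 * π * (c ^ 2 * p + q)))⁻¹ *
          Real.exp (-(x - (c * m + d)) ^ 2 / (2 * (c ^ 2 * p + q))) := by
  have hπ : (0:ℝ) < π := Real.pi_pos
  have hV : (0:ℝ) < c ^ 2 * p + q := by positivity
  set V : ℝ := c ^ 2 * p + q with hVdef
  set β : ℝ := V / (2 * p * q) with hβdef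
  have hβ : 0 < β := by positivity
  set D : ℝ := m + c * p * (x - (c * m + d)) / V with hDdef
  set K : ℝ := (Real.sqrt (2 * π * p))⁻¹ * (Real.sqrt (2 * π * q))⁻¹ *
      Real.exp (-(x - (c * m + d)) ^ 2 / (2 * V)) with hKdef
  have key : ∀ t : ℝ,
      (Real.sqrt (2 * π * p))⁻¹ * Real.exp (-(t - m) ^ 2 / (2 * p)) *
        ((Real.sqrt (2 * π * q))⁻¹ * Real.exp (-(x - (c * t + d)) ^ 2 / (2 * q)))
      = K * Real.exp (-β * (t - D) ^ 2) := by
    intro t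
    have hexp : Real.exp (-(t - m) ^ 2 / (2 * p)) * Real.exp (-(x - (c * t + d)) ^ 2 / (2 * q))
        = Real.exp (-(x - (c * m + d)) ^ 2 / (2 * V)) * Real.exp (-β * (t - D) ^ 2) := by
      rw [← Real.exp_add, ← Real.exp_add]
      congr 1
      rw [hDdef, hβdef, hVdef]
      field_simp
      ring
    rw [hKdef]
    calc (Real.sqrt (2 * π * p))⁻¹ * Real.exp (-(t - m) ^ 2 / (2 * p)) *
          ((Real.sqrt (2 * π * q))⁻¹ * Real.exp (-(x - (c * t + d)) ^ 2 / (2 * q)))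
        = (Real.sqrt (2 * π * p))⁻¹ * (Real.sqrt (2 * π * q))⁻¹ *
            (Real.exp (-(t - m) ^ 2 / (2 * p)) * Real.exp (-(x - (c * t + d)) ^ 2 / (2 * q))) := by
          ring
      _ = _ := by rw [hexp]; ring
  calc ∫ t : ℝ, (Real.sqrt (2 * π * p))⁻¹ * Real.exp (-(t - m) ^ 2 / (2 * p)) *
        ((Real.sqrt (2 * π * q))⁻¹ * Real.exp (-(x - (c * t + d)) ^ 2 / (2 * q)))
      = ∫ t : ℝ, K * Real.exp (-β * (t - D) ^ 2) := by
        exact integral_congr_ae (Filter.Eventually.of_forall key)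
    _ = K * ∫ t : ℝ, Real.exp (-β * (t - D) ^ 2) := integral_const_mul _ _
    _ = K * ∫ t : ℝ, Real.exp (-β * t ^ 2) :=
        congrArg _ (integral_sub_right_eq_self (fun t => Real.exp (-β * t ^ 2)) D)
    _ = K * Real.sqrt (π / β) := by rw [integral_gaussian]
    _ = _ := by
      rw [hKdef]
      have hsq : (Real.sqrt (2 * π * p))⁻¹ * (Real.sqrt (2 * π * q))⁻¹ * Real.sqrt (π / β)
          = (Real.sqrt (2 * π * V))⁻¹ := by
        rw [← Real.sqrt_inv, ← Real.sqrt_inv, ← Real.sqrt_inv,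
          ← Real.sqrt_mul (by positivity), ← Real.sqrt_mul (by positivity)]
        congr 1
        rw [hβdef]
        field_simp
      rw [hVdef] at hsq ⊢
      rw [← hsq]
      ring

/-- The general gaussian bind lemma. -/
lemma gaussianReal_bind (m c d : ℝ) (v₁ v₂ : ℝ≥0) (h₁ : v₁ ≠ 0) (h₂ : v₂ ≠ 0) :
    (gaussianReal m v₁).bind (fun y => gaussianReal (c * y + d) v₂)
      = gaussianReal (c * m + d) (⟨c ^ 2, sq_nonneg c⟩ * v₁ + v₂) := by
  have hp : (0:ℝ) < (v₁ : ℝ) := by positivity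
  have hq : (0:ℝ) < (v₂ : ℝ) := by positivity
  have hV : (⟨c ^ 2, sq_nonneg c⟩ * v₁ + v₂ : ℝ≥0) ≠ 0 := by
    intro h
    exact h₂ (add_eq_zero.mp h).2
  have hVcoe : ((⟨c ^ 2, sq_nonneg c⟩ * v₁ + v₂ : ℝ≥0) : ℝ) = c ^ 2 * v₁ + v₂ := by
    push_cast
    rfl
  have hinner : ∀ x : ℝ,
      ∫⁻ t : ℝ, gaussianPDF m v₁ t * gaussianPDF (c * t + d) v₂ x
        = gaussianPDF (c * m + d) (⟨c ^ 2, sq_nonneg c⟩ * v₁ + v₂) x := by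
    intro x
    have h1 : ∀ t : ℝ, gaussianPDF m v₁ t * gaussianPDF (c * t + d) v₂ x
        = ENNReal.ofReal (gaussianPDFReal m v₁ t * gaussianPDFReal (c * t + d) v₂ x) := by
      intro t
      rw [gaussianPDF, gaussianPDF, ← ENNReal.ofReal_mul (gaussianPDFReal_nonneg _ _ _)]
    simp_rw [h1]
    have hInt : Integrable (fun t : ℝ =>
        gaussianPDFReal m v₁ t * gaussianPDFReal (c * t + d) v₂ x) := by
      have := (integrable_gaussianPDFReal m v₁).bdd_mul (c := (Real.sqrt (2 * π * v₂))⁻¹)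
        ((continuous_pdf_mean c d x v₂).aestronglyMeasurable)
        (Filter.Eventually.of_forall fun t => by
          rw [Real.norm_eq_abs, abs_of_nonneg (gaussianPDFReal_nonneg _ _ _)]
          exact pdf_le _ _ _)
      simpa [mul_comm] using this
    rw [← ofReal_integral_eq_lintegral_ofReal hInt
      (Filter.Eventually.of_forall fun t =>
        mul_nonneg (gaussianPDFReal_nonneg _ _ _) (gaussianPDFReal_nonneg _ _ _))]
    rw [gaussianPDF]
    congr 1
    have := real_conv m c d hp hq x
    simp only [gaussianPDFReal]
    rw [hVcoe]
    exact this
  ext s hs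
  rw [Measure.bind_apply hs (measurable_ker c d v₂).aemeasurable, gaussianReal_apply _ hV]
  simp_rw [gaussianReal_apply _ h₂ s]
  rw [gaussianReal_of_var_ne_zero m h₁,
    lintegral_withDensity_eq_lintegral_mul _ (measurable_gaussianPDF m v₁)
      ((measurable_pdf_joint c d v₂).lintegral_prod_right')]
  simp only [Pi.mul_apply]
  have hswap : ∫⁻ t : ℝ, gaussianPDF m v₁ t * ∫⁻ x in s, gaussianPDF (c * t + d) v₂ x
      = ∫⁻ x in s, ∫⁻ t : ℝ, gaussianPDF m v₁ t * gaussianPDF (c * t + d) v₂ x := by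
    have hmeas : AEMeasurable (Function.uncurry fun t x : ℝ =>
        gaussianPDF m v₁ t * gaussianPDF (c * t + d) v₂ x)
        (volume.prod (volume.restrict s)) := by
      apply Measurable.aemeasurable
      exact ((measurable_gaussianPDF m v₁).comp measurable_fst).mul (measurable_pdf_joint c d v₂)
    calc ∫⁻ t : ℝ, gaussianPDF m v₁ t * ∫⁻ x in s, gaussianPDF (c * t + d) v₂ x
        = ∫⁻ t : ℝ, ∫⁻ x in s, gaussianPDF m v₁ t * gaussianPDF (c * t + d) v₂ x := by
          congr 1
          ext t
          rw [lintegral_const_mul _ (measurable_gaussianPDF _ _)]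
      _ = _ := lintegral_lintegral_swap hmeas
  rw [hswap]
  exact lintegral_congr fun x => hinner x

end GouCK

/-- Chapman–Kolmogorov property of the GOU transition kernels: composing the
GOU transition over accumulated mean-reversion time `a` with the GOU transition
over time `b` gives the GOU transition over time `a + b`. -/
theorem gou_chapman_kolmogorov (σ a b μ x₀ : ℝ) (hσ : 0 < σ) (ha : 0 < a)
    (hb : 0 < b) :
    (gaussianReal (μ + (x₀ - μ) * Real.exp (-a))
        (Real.toNNReal (σ ^ 2 * (1 - Real.exp (-2 * a))))).bind
      (fun y => gaussianReal (μ + (y - μ) * Real.exp (-b))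
        (Real.toNNReal (σ ^ 2 * (1 - Real.exp (-2 * b)))))
    = gaussianReal (μ + (x₀ - μ) * Real.exp (-(a + b)))
        (Real.toNNReal (σ ^ 2 * (1 - Real.exp (-2 * (a + b))))) := by
  have hA : (0:ℝ) < σ ^ 2 * (1 - Real.exp (-2 * a)) := by
    have : Real.exp (-2 * a) < 1 := Real.exp_lt_one_iff.mpr (by linarith)
    have h2 : (0:ℝ) < 1 - Real.exp (-2 * a) := by linarith
    positivity
  have hB : (0:ℝ) < σ ^ 2 * (1 - Real.exp (-2 * b)) := by
    have : Real.exp (-2 * b) < 1 := Real.exp_lt_one_iff.mpr (by linarith)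
    have h2 : (0:ℝ) < 1 - Real.exp (-2 * b) := by linarith
    positivity
  have h₁ : Real.toNNReal (σ ^ 2 * (1 - Real.exp (-2 * a))) ≠ 0 :=
    (Real.toNNReal_pos.mpr hA).ne'
  have h₂ : Real.toNNReal (σ ^ 2 * (1 - Real.exp (-2 * b))) ≠ 0 :=
    (Real.toNNReal_pos.mpr hB).ne'
  have hker : (fun y => gaussianReal (μ + (y - μ) * Real.exp (-b))
      (Real.toNNReal (σ ^ 2 * (1 - Real.exp (-2 * b)))))
      = fun y => gaussianReal (Real.exp (-b) * y + (μ - μ * Real.exp (-b)))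
      (Real.toNNReal (σ ^ 2 * (1 - Real.exp (-2 * b)))) := by
    funext y
    congr 1
    ring
  rw [hker, GouCK.gaussianReal_bind _ _ _ _ _ h₁ h₂]
  have e1 : Real.exp (-2 * (a + b)) = Real.exp (-2 * a) * Real.exp (-2 * b) := by
    rw [← Real.exp_add]; ring_nf
  have e2 : Real.exp (-b) ^ 2 = Real.exp (-2 * b) := by
    rw [sq, ← Real.exp_add]; ring_nf
  have e3 : Real.exp (-(a + b)) = Real.exp (-a) * Real.exp (-b) := by
    rw [← Real.exp_add]; ring_nf
  congr 1
  · rw [e3]; ring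
  · apply NNReal.coe_injective
    push_cast [Real.coe_toNNReal _ hA.le, Real.coe_toNNReal _ hB.le,
      Real.coe_toNNReal _ (by rw [e1] at *; nlinarith [Real.exp_pos (-2*a), Real.exp_pos (-2*b)] : (0:ℝ) ≤ σ ^ 2 * (1 - Real.exp (-2 * (a + b))))]
    change ((Real.exp (-b) ^ 2 : ℝ) * ((σ ^ 2 * (1 - Real.exp (-2 * a))).toNNReal : ℝ)) + _ = _
    rw [Real.coe_toNNReal _ hA.le]
    rw [e2, e1]
    ring
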